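/- Every (ε,δ)-DP mechanism satisfies f-DP with f(α) = max{1 − δ − e^ε·α, (1 − δ − α)/e^ε}, and substituting this into the f-DP advantage bound yields η-RAD ≤ min{ κ⁺(e^ε − 1) + δ, ((1 − κ⁻)(e^ε − 1) + δ)/e^ε }, since max_{α ∈ [κ⁻,κ⁺]} (1 − f₁(α) − α) = κ⁺(e^ε − 1) + δ for f₁(α) = 1 − δ − e^ε α and max_{α ∈ [κ⁻,κ⁺]} (1 − f₂(α) − α) = ((1−κ⁻)(e^ε−1)+δ)/e^ε for f₂(α) = (1−δ−α)/e^ε. -/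
import Mathlib


open MeasureTheory

theorem dp_implies_fdp_and_max_bounds {Θ : Type*} [MeasurableSpace Θ]
    (ε δ : ℝ) (hε : 0 ≤ ε) (hδ0 : 0 ≤ δ) (hδ1 : δ ≤ 1)
    (κm κp : ℝ) (h0 : 0 ≤ κm) (hmp : κm ≤ κp) (hp1 : κp ≤ 1) :
    (∀ P Q : Measure Θ, IsProbabilityMeasure P → IsProbabilityMeasure Q →
      (∀ S : Set Θ, MeasurableSet S →
        (P S).toReal ≤ Real.exp ε * (Q S).toReal + δ ∧
        (Q S).toReal ≤ Real.exp ε * (P S).toReal + δ) →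
      ∀ S : Set Θ, MeasurableSet S →
        (P S).toReal ≤ 1 - max (1 - δ - Real.exp ε * (Q S).toReal)
          ((1 - δ - (Q S).toReal) / Real.exp ε)) ∧
    (⨆ α : Set.Icc κm κp, (1 - (1 - δ - Real.exp ε * (α : ℝ)) - α)) =
      κp * (Real.exp ε - 1) + δ ∧
    (⨆ α : Set.Icc κm κp, (1 - (1 - δ - (α : ℝ)) / Real.exp ε - α)) =
      ((1 - κm) * (Real.exp ε - 1) + δ) / Real.exp ε ∧
    (⨆ α : Set.Icc κm κp,
        (1 - max (1 - δ - Real.exp ε * (α : ℝ)) ((1 - δ - (α : ℝ)) / Real.exp ε) - α)) ≤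
      min (κp * (Real.exp ε - 1) + δ) (((1 - κm) * (Real.exp ε - 1) + δ) / Real.exp ε) := by
  have hepos : (0 : ℝ) < Real.exp ε := Real.exp_pos ε
  have he1 : (1 : ℝ) ≤ Real.exp ε := Real.one_le_exp hε
  have hne : Nonempty (Set.Icc κm κp) := ⟨⟨κm, le_refl _, hmp⟩⟩
  have hq : ∀ α : ℝ, (1 - δ - α) / Real.exp ε * Real.exp ε = 1 - δ - α := fun α =>
    div_mul_cancel₀ _ hepos.ne'
  refine ⟨?_, ?_, ?_, ?_⟩
  · intro P Q hP hQ hdp S hS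
    have h1 := (hdp S hS).1
    have h2 := (hdp Sᶜ hS.compl).2
    have hPc : (P Sᶜ).toReal = 1 - (P S).toReal := by
      rw [prob_compl_eq_one_sub hS]
      rw [ENNReal.toReal_sub_of_le prob_le_one (by simp)]
      simp
    have hQc : (Q Sᶜ).toReal = 1 - (Q S).toReal := by
      rw [prob_compl_eq_one_sub hS]
      rw [ENNReal.toReal_sub_of_le prob_le_one (by simp)]
      simp
    rw [hPc, hQc] at h2
    rw [le_sub_iff_add_le, add_comm, ← le_sub_iff_add_le]
    refine max_le (by linarith) ?_
    rw [div_le_iff₀ hepos]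
    nlinarith
  · apply le_antisymm
    · apply ciSup_le
      rintro ⟨α, hα1, hα2⟩
      simp only
      nlinarith [he1]
    · have := le_ciSup (f := fun α : Set.Icc κm κp => (1 - (1 - δ - Real.exp ε * (α : ℝ)) - α))
        (by
          refine ⟨κp * (Real.exp ε - 1) + δ + 1, ?_⟩
          rintro x ⟨⟨α, hα1, hα2⟩, rfl⟩
          simp only
          nlinarith [he1]) ⟨κp, hmp, le_refl _⟩
      calc κp * (Real.exp ε - 1) + δ = 1 - (1 - δ - Real.exp ε * κp) - κp := by ring
        _ ≤ _ := this
  · apply le_antisymm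
    · apply ciSup_le
      rintro ⟨α, hα1, hα2⟩
      simp only
      rw [le_div_iff₀ hepos]
      nlinarith [hq α, mul_nonneg (sub_nonneg.2 hα1) (sub_nonneg.2 he1)]
    · have := le_ciSup (f := fun α : Set.Icc κm κp => (1 - (1 - δ - (α : ℝ)) / Real.exp ε - α))
        (by
          refine ⟨((1 - κm) * (Real.exp ε - 1) + δ) / Real.exp ε + 1, ?_⟩
          rintro x ⟨⟨α, hα1, hα2⟩, rfl⟩
          simp only
          have : 1 - (1 - δ - α) / Real.exp ε - α ≤
              ((1 - κm) * (Real.exp ε - 1) + δ) / Real.exp ε := by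
            rw [le_div_iff₀ hepos]
            nlinarith [hq α, mul_nonneg (sub_nonneg.2 hα1) (sub_nonneg.2 he1)]
          linarith) ⟨κm, le_refl _, hmp⟩
      calc ((1 - κm) * (Real.exp ε - 1) + δ) / Real.exp ε
          = 1 - (1 - δ - κm) / Real.exp ε - κm := by field_simp; ring
        _ ≤ _ := this
  · apply le_min
    · apply ciSup_le
      rintro ⟨α, hα1, hα2⟩
      simp only
      have hm := le_max_left (1 - δ - Real.exp ε * α) ((1 - δ - α) / Real.exp ε)
      nlinarith [he1]
    · apply ciSup_le
      rintro ⟨α, hα1, hα2⟩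
      simp only
      have hm := le_max_right (1 - δ - Real.exp ε * α) ((1 - δ - α) / Real.exp ε)
      have h2 : 1 - (1 - δ - α) / Real.exp ε - α ≤
          ((1 - κm) * (Real.exp ε - 1) + δ) / Real.exp ε := by
        rw [le_div_iff₀ hepos]
        nlinarith [hq α, mul_nonneg (sub_nonneg.2 hα1) (sub_nonneg.2 he1)]
      linarith
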